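/- For every α ∈ (0, ∞) and every t ∈ (0, 1), the function η(t) = t·(2 + (6α−3)t + 4(α²−α)t²)/((1 − t + αt)²(1 + αt)²) + 2·log(1 − t/(1 + αt)) has derivative η'(t) = −t²(1 + 3(1 − 2α + 2(α − α²)t)²)/(2(1 − t + αt)³(1 + αt)³); in particular η'(t) < 0, so η is strictly decreasing on (0,1). -/

import Mathlib

/-- The function `η` from the paper, for a parameter `α`. -/
noncomputable def eta (α t : ℝ) : ℝ :=
  t * (2 + (6 * α - 3) * t + 4 * (α ^ 2 - α) * t ^ 2) /
      ((1 - t + α * t) ^ 2 * (1 + α * t) ^ 2) +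
    2 * Real.log (1 - t / (1 + α * t))

set_option maxHeartbeats 2000000 in
theorem eta_deriv (α : ℝ) (hα : α ∈ Set.Ioi (0:ℝ)) :
    (∀ t ∈ Set.Ioo (0:ℝ) 1,
        HasDerivAt (eta α)
          (-(t ^ 2 * (1 + 3 * (1 - 2 * α + 2 * (α - α ^ 2) * t) ^ 2)) /
            (2 * (1 - t + α * t) ^ 3 * (1 + α * t) ^ 3)) t) ∧
      (∀ t ∈ Set.Ioo (0:ℝ) 1,
        -(t ^ 2 * (1 + 3 * (1 - 2 * α + 2 * (α - α ^ 2) * t) ^ 2)) /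
            (2 * (1 - t + α * t) ^ 3 * (1 + α * t) ^ 3) < 0) ∧
      StrictAntiOn (eta α) (Set.Ioo (0:ℝ) 1) := by
  have hα0 : (0:ℝ) < α := hα
  have key : ∀ t ∈ Set.Ioo (0:ℝ) 1,
      HasDerivAt (eta α)
        (-(t ^ 2 * (1 + 3 * (1 - 2 * α + 2 * (α - α ^ 2) * t) ^ 2)) /
          (2 * (1 - t + α * t) ^ 3 * (1 + α * t) ^ 3)) t := by
    intro t ht
    obtain ⟨ht0, ht1⟩ := ht
    have h1 : (0:ℝ) < 1 + α * t := by nlinarith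
    have h2 : (0:ℝ) < 1 - t + α * t := by nlinarith
    have hu : (0:ℝ) < 1 - t / (1 + α * t) := by
      rw [sub_pos, div_lt_one h1]; nlinarith
    have hN : HasDerivAt (fun t : ℝ => t * (2 + (6 * α - 3) * t + 4 * (α ^ 2 - α) * t ^ 2))
        (2 + 2 * (6 * α - 3) * t + 12 * (α ^ 2 - α) * t ^ 2) t := by
      have := (hasDerivAt_id t).mul (((hasDerivAt_const t (2:ℝ)).add
        ((hasDerivAt_const t (6 * α - 3)).mul (hasDerivAt_id t))).add
        ((hasDerivAt_const t (4 * (α ^ 2 - α))).mul (hasDerivAt_pow 2 t)))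
      convert this using 1
      case e'_4 => rfl
      case e'_5 => rfl
      case e'_8 => rfl
      simp; ring
    have hA : HasDerivAt (fun t : ℝ => 1 - t + α * t) (-1 + α) t := by
      have := ((hasDerivAt_const t (1:ℝ)).sub (hasDerivAt_id t)).add
        ((hasDerivAt_const t α).mul (hasDerivAt_id t))
      convert this using 1
      case e'_4 => rfl
      case e'_5 => rfl
      case e'_8 => rfl
      simp
    have hB : HasDerivAt (fun t : ℝ => 1 + α * t) α t := by
      have := (hasDerivAt_const t (1:ℝ)).add ((hasDerivAt_const t α).mul (hasDerivAt_id t))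
      convert this using 1
      case e'_4 => rfl
      case e'_5 => rfl
      case e'_8 => rfl
      simp
    have hD := (hA.pow 2).mul (hB.pow 2)
    have hq : HasDerivAt (fun t : ℝ => t / (1 + α * t))
        ((1 * (1 + α * t) - t * α) / (1 + α * t) ^ 2) t := by
      have := (hasDerivAt_id t).div hB h1.ne'
      convert this using 1
      case e'_4 => rfl
      case e'_5 => rfl
      case e'_8 => rfl
      rfl
    have hlog := (((hasDerivAt_const t (1:ℝ)).sub hq).log hu.ne').const_mul 2
    have hDne : (1 - t + α * t) ^ 2 * (1 + α * t) ^ 2 ≠ 0 := by positivity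
    have htot := (hN.div hD hDne).add hlog
    convert htot using 1
    case e'_4 => rfl
    case e'_5 => rfl
    case e'_8 => rfl
    have hlv : 2 * ((0 - (1 * (1 + α * t) - t * α) / (1 + α * t) ^ 2) / (1 - t / (1 + α * t)))
        = -2 / ((1 - t + α * t) * (1 + α * t)) := by
      rw [show (1:ℝ) - t / (1 + α * t) = (1 - t + α * t) / (1 + α * t) by
        field_simp; ring]
      field_simp
      ring
    simp only [Pi.sub_apply, Pi.mul_apply, Pi.pow_apply]
    rw [hlv]
    push_cast
    field_simp
    ring
  refine ⟨key, ?_, ?_⟩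
  · intro t ht
    obtain ⟨ht0, ht1⟩ := ht
    have h1 : (0:ℝ) < 1 + α * t := by nlinarith
    have h2 : (0:ℝ) < 1 - t + α * t := by nlinarith
    apply div_neg_of_neg_of_pos
    · have : (0:ℝ) < t ^ 2 * (1 + 3 * (1 - 2 * α + 2 * (α - α ^ 2) * t) ^ 2) := by positivity
      linarith
    · positivity
  · apply strictAntiOn_of_deriv_neg (convex_Ioo 0 1)
    · intro t ht
      exact (key t ht).differentiableAt.continuousAt.continuousWithinAt
    · rw [interior_Ioo]
      intro t ht
      rw [(key t ht).deriv]
      obtain ⟨ht0, ht1⟩ := ht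
      have h1 : (0:ℝ) < 1 + α * t := by nlinarith
      have h2 : (0:ℝ) < 1 - t + α * t := by nlinarith
      apply div_neg_of_neg_of_pos
      · have : (0:ℝ) < t ^ 2 * (1 + 3 * (1 - 2 * α + 2 * (α - α ^ 2) * t) ^ 2) := by positivity
        linarith
      · positivity
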